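/- Let H = (V,E) be a finite hypergraph with |E| = m, fix an edge d ∈ E, fix r ∈ {1,…,m}, and fix an injective sequence σ = (σ_1,…,σ_{r−1}) of edges (d not among them) such that d is still free after the sequential greedy matching processes σ_1,…,σ_{r−1} in order; let P denote the set of edges incident to d (including d) that are still free at that point. Then for every subset U ⊆ E, the number of bijections π : E → {1,…,m} with π(σ_i) = i for all i < r such that the greedy matching on π removes d from the free set at step r with p(d) ∈ U is exactly |P ∩ U| · (m − r)!. -/

import Mathlib

/-!
Counting lemma:  fix an edge `d`, a step `r ∈ {1,…,m}` and an injective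
sequence `σ = (σ₁,…,σ_{r-1})` of edges not containing `d` such that `d` is
still free after the greedy process handles `σ` in order; let `P` be the set
of edges incident to `d` (including `d`) still free at that point.  Then for
every `U ⊆ E`, the number of priority bijections `π : E ≃ Fin m` (step `i`
corresponds to `π`-value `i - 1`) with `π(σᵢ) = i` for all `i < r` such that
the greedy matching on `π` removes `d` from the free set at step `r` with
`p(d) ∈ U` is exactly `|P ∩ U| ⬝ (m - r)!`.
-/

open Finset

open scoped Classical

variable {V E : Type*}

/-- Two hyperedges are incident if they share a vertex. -/
def Incident [DecidableEq V] (vert : E → Finset V) (e f : E) : Prop :=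
  (vert e ∩ vert f).Nonempty

/-- `Matched vert π e` holds iff the sequential greedy matching (processing the
edges in increasing `π`-order, selecting an edge iff it is still free when
processed) selects `e`. -/
def Matched [DecidableEq V] (vert : E → Finset V) (π : E → ℕ) (e : E) : Prop :=
  ∀ f, π f < π e → Incident vert f e → ¬ Matched vert π f
termination_by π e

/-- The matched edge owning `e` (the `π`-least matched edge incident to `e`),
i.e. the matched edge `p(e)` whose sample space `e` belongs to;  `e` is removed
from the free set at the step at which `p(e)` is processed. -/
noncomputable def owner [DecidableEq V] (vert : E → Finset V) (π : E → ℕ) (e : E) : E :=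
  if h : ∃ f, (Matched vert π f ∧ Incident vert f e) ∧
      ∀ f', Matched vert π f' → Incident vert f' e → π f ≤ π f' then
    h.choose
  else e

/-- One step of the greedy process on the free set `F`:  process edge `e`;
if `e` is free it is selected and all free edges incident to it (including `e`
itself) are removed from the free set. -/
noncomputable def stepFree [DecidableEq V] [DecidableEq E]
    (vert : E → Finset V) (F : Finset E) (e : E) : Finset E :=
  if e ∈ F then F.filter fun f => ¬ Incident vert e f else F

/-- The set of free edges after the greedy process handles the edges of the
list `L` in order (starting from all edges free). -/
noncomputable def freeAfter [DecidableEq V] [DecidableEq E] [Fintype E]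
    (vert : E → Finset V) (L : List E) : Finset E :=
  L.foldl (stepFree vert) Finset.univ

/-! ### Auxiliary lemmas -/

lemma hL_restrict {m : ℕ} (π : E ≃ Fin m) (L : List E) (a : E)
    (h : ∀ i : Fin (L ++ [a]).length, ((π ((L ++ [a]).get i)) : ℕ) = (i : ℕ)) :
    (∀ i : Fin L.length, ((π (L.get i)) : ℕ) = (i : ℕ)) ∧ ((π a : ℕ)) = L.length := by
  constructor
  · intro i
    have hi : (i : ℕ) < (L ++ [a]).length := by simp
    have h2 := h ⟨i, hi⟩
    simpa [List.get_eq_getElem, List.getElem_append_left, i.2] using h2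
  · have hi : L.length < (L ++ [a]).length := by simp
    have h2 := h ⟨L.length, hi⟩
    simpa [List.get_eq_getElem, List.getElem_concat_length] using h2

lemma mem_freeAfter_iff [DecidableEq V] [DecidableEq E] [Fintype E] {m : ℕ}
    (vert : E → Finset V) (π : E ≃ Fin m) :
    ∀ (L : List E), (∀ i : Fin L.length, ((π (L.get i)) : ℕ) = (i : ℕ)) →
    ∀ e : E, (e ∈ freeAfter vert L ↔
      ∀ f, ((π f : ℕ)) < L.length → Incident vert f e →
        ¬ Matched vert (fun x => (π x : ℕ)) f) := by
  intro L
  induction L using List.reverseRecOn with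
  | nil => intro _ e; simp [freeAfter]
  | append_singleton L a ih =>
    intro hL e
    obtain ⟨hL', ha⟩ := hL_restrict π L a hL
    have hfa : freeAfter vert (L ++ [a]) = stepFree vert (freeAfter vert L) a := by
      simp [freeAfter, List.foldl_append]
    have hMa : Matched vert (fun x => (π x : ℕ)) a ↔ a ∈ freeAfter vert L := by
      rw [Matched, ih hL' a]
      simp only [ha]
    rw [hfa, stepFree]
    have hflen : (L ++ [a]).length = L.length + 1 := by simp
    rw [hflen]
    by_cases haf : a ∈ freeAfter vert L
    · rw [if_pos haf, Finset.mem_filter]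
      constructor
      · rintro ⟨he, hni⟩ f hf hinc hMf
        rcases Nat.lt_succ_iff_lt_or_eq.mp hf with h | h
        · exact (ih hL' e).mp he f h hinc hMf
        · have : f = a := π.injective (Fin.ext (h.trans ha.symm))
          subst this
          exact hni hinc
      · intro h
        refine ⟨(ih hL' e).mpr fun f hf hinc => h f (Nat.lt_succ_of_lt hf) hinc, ?_⟩
        intro hi
        exact h a (by rw [ha]; exact Nat.lt_succ_self _) hi (hMa.mpr haf)
    · rw [if_neg haf]
      rw [ih hL' e]
      constructor
      · intro h f hf hinc hMf
        rcases Nat.lt_succ_iff_lt_or_eq.mp hf with h' | h'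
        · exact h f h' hinc hMf
        · have : f = a := π.injective (Fin.ext (h'.trans ha.symm))
          subst this
          exact haf (hMa.mp hMf)
      · intro h f hf hinc
        exact h f (Nat.lt_succ_of_lt hf) hinc

lemma matched_iff_mem_freeAfter [DecidableEq V] [DecidableEq E] [Fintype E] {m : ℕ}
    (vert : E → Finset V) (π : E ≃ Fin m) (L : List E)
    (hL : ∀ i : Fin L.length, ((π (L.get i)) : ℕ) = (i : ℕ)) (a : E)
    (ha : ((π a : ℕ)) = L.length) :
    Matched vert (fun x => ((π x : ℕ))) a ↔ a ∈ freeAfter vert L := by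
  rw [Matched, mem_freeAfter_iff vert π L hL a]
  simp only [ha]

lemma owner_exists [DecidableEq V] [Fintype E] (vert : E → Finset V)
    (hne : ∀ e, (vert e).Nonempty) (π : E → ℕ) (d : E) :
    ∃ f, (Matched vert π f ∧ Incident vert f d) ∧
      ∀ f', Matched vert π f' → Incident vert f' d → π f ≤ π f' := by
  classical
  have hdd : Incident vert d d := by simpa [Incident] using hne d
  have hSne : (Finset.univ.filter fun f => Matched vert π f ∧ Incident vert f d).Nonempty := by
    by_contra h
    have hnone : ∀ f, ¬ (Matched vert π f ∧ Incident vert f d) := by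
      intro f hf
      exact h ⟨f, Finset.mem_filter.2 ⟨Finset.mem_univ f, hf⟩⟩
    have hMd : Matched vert π d := by
      rw [Matched]; intro f _ hinc hMf; exact hnone f ⟨hMf, hinc⟩
    exact hnone d ⟨hMd, hdd⟩
  obtain ⟨f, hf, hmin⟩ := Finset.exists_min_image _ π hSne
  rw [Finset.mem_filter] at hf
  exact ⟨f, hf.2, fun f' h1 h2 =>
    hmin f' (Finset.mem_filter.2 ⟨Finset.mem_univ _, h1, h2⟩)⟩

lemma owner_spec [DecidableEq V] [Fintype E] (vert : E → Finset V)
    (hne : ∀ e, (vert e).Nonempty) (π : E → ℕ) (d : E) :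
    (Matched vert π (owner vert π d) ∧ Incident vert (owner vert π d) d) ∧
      ∀ f', Matched vert π f' → Incident vert f' d → π (owner vert π d) ≤ π f' := by
  have h := owner_exists vert hne π d
  rw [owner, dif_pos h]
  exact h.choose_spec

lemma owner_eq [DecidableEq V] [Fintype E] (vert : E → Finset V)
    (hne : ∀ e, (vert e).Nonempty) (π : E → ℕ) (hinj : Function.Injective π) (d w : E)
    (hw : Matched vert π w) (hinc : Incident vert w d)
    (hmin : ∀ f', Matched vert π f' → Incident vert f' d → π w ≤ π f') :
    owner vert π d = w := by
  obtain ⟨⟨h1, h2⟩, h3⟩ := owner_spec vert hne π d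
  exact hinj (le_antisymm (h3 w hw hinc) (hmin _ h1 h2))

lemma foldl_stepFree_subset [DecidableEq V] [DecidableEq E] (vert : E → Finset V)
    (L : List E) (F : Finset E) : L.foldl (stepFree vert) F ⊆ F := by
  induction L generalizing F with
  | nil => simp
  | cons a L ih =>
    refine (ih (stepFree vert F a)).trans ?_
    unfold stepFree
    split
    · exact Finset.filter_subset _ _
    · exact Finset.Subset.refl _

lemma not_mem_foldl_stepFree [DecidableEq V] [DecidableEq E] (vert : E → Finset V)
    (hne : ∀ e, (vert e).Nonempty) (L : List E) (F : Finset E) {x : E} (hx : x ∈ L) :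
    x ∉ L.foldl (stepFree vert) F := by
  induction L generalizing F with
  | nil => simp at hx
  | cons a L ih =>
    rcases List.mem_cons.mp hx with rfl | hx
    · intro hmem
      have hsub := foldl_stepFree_subset vert L (stepFree vert F x) hmem
      unfold stepFree at hsub
      split at hsub
      · exact (Finset.mem_filter.mp hsub).2 (by simpa [Incident] using hne x)
      · next h => exact h hsub
    · exact ih _ hx

lemma count_ext [DecidableEq E] [Fintype E] {m : ℕ} (hm : Fintype.card E = m)
    (L : List E) (hnd : L.Nodup) (hlen : L.length ≤ m) :
    (Finset.univ.filter fun π : E ≃ Fin m =>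
        ∀ i : Fin L.length, ((π (L.get i)) : ℕ) = (i : ℕ)).card
      = (m - L.length).factorial := by
  classical
  set k := L.length with hk
  have hkm : k ≤ m := hlen
  set s : Set E := {x | x ∈ L} with hs
  set t : Set (Fin m) := {j | (j : ℕ) < k} with ht
  have hidx : ∀ x ∈ L, L.idxOf x < k := by
    intro x hx
    rw [hk]
    exact List.idxOf_lt_length_iff.2 hx
  let e₀ : s ≃ t :=
    { toFun := fun x => ⟨⟨L.idxOf x.1, lt_of_lt_of_le (hidx x.1 x.2) hkm⟩, hidx x.1 x.2⟩
      invFun := fun j => ⟨L.get ⟨j.1.1, j.2⟩, List.get_mem _ _⟩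
      left_inv := fun x => Subtype.ext (List.idxOf_get _)
      right_inv := fun j => Subtype.ext (Fin.ext (by
        simpa [List.get_eq_getElem] using hnd.idxOf_getElem j.1.1 j.2)) }
  have he₀ : ∀ x : s, (((e₀ x : Fin m)) : ℕ) = L.idxOf x.1 := fun _ => rfl
  have hpq : ∀ π : E ≃ Fin m,
      (∀ i : Fin L.length, ((π (L.get i)) : ℕ) = (i : ℕ)) ↔ (∀ x : s, π x = e₀ x) := by
    intro π
    constructor
    · rintro h ⟨x, hx⟩
      have hi := h ⟨L.idxOf x, hidx x hx⟩
      have hget : L.get ⟨L.idxOf x, lt_of_lt_of_le (hidx x hx) (le_refl _)⟩ = x :=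
        List.idxOf_get _
      rw [hget] at hi
      exact Fin.ext hi
    · intro h i
      have h2 := congrArg Fin.val (h ⟨L.get i, List.get_mem _ _⟩)
      rw [he₀] at h2
      rw [h2]
      simpa [List.get_eq_getElem] using hnd.idxOf_getElem i.1 i.2
  have hct0 : Fintype.card t = k := by
    have e1 : t ≃ Fin k :=
      { toFun := fun j => ⟨j.1.1, j.2⟩
        invFun := fun i => ⟨⟨i.1, lt_of_lt_of_le i.2 hkm⟩, i.2⟩
        left_inv := fun j => Subtype.ext (Fin.ext rfl)
        right_inv := fun i => rfl }
    simp [Fintype.card_congr e1]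
  have hcs0 : Fintype.card s = k := (Fintype.card_congr e₀).trans hct0
  have hcs : Fintype.card (↥sᶜ) = m - k := by
    rw [Fintype.card_compl_set, hcs0, hm]
  have hct : Fintype.card (↥tᶜ) = m - k := by
    rw [Fintype.card_compl_set, hct0, Fintype.card_fin]
  calc (Finset.univ.filter fun π : E ≃ Fin m =>
        ∀ i : Fin L.length, ((π (L.get i)) : ℕ) = (i : ℕ)).card
      = Fintype.card {π : E ≃ Fin m // ∀ x : s, π x = e₀ x} := by
        rw [Fintype.card_subtype]
        congr 1
        apply Finset.filter_congr
        intro π _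
        exact hpq π
    _ = Fintype.card ((↥sᶜ) ≃ (↥tᶜ)) := Fintype.card_congr (Equiv.Set.compl e₀)
    _ = (m - k).factorial := by
        rw [Fintype.card_equiv (Fintype.equivOfCardEq (hcs.trans hct.symm)), hcs]

theorem stmt4 [DecidableEq V] [Fintype E] [DecidableEq E] {m r : ℕ}
    (vert : E → Finset V) (hne : ∀ e : E, (vert e).Nonempty)
    (hm : Fintype.card E = m) (d : E)
    (hr1 : 1 ≤ r) (hrm : r ≤ m)
    (σ : List E) (hσlen : σ.length = r - 1) (hσinj : σ.Nodup) (hdσ : d ∉ σ)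
    (hfree : d ∈ freeAfter vert σ) (U : Finset E) :
    -- `P`: the edges incident to `d` (including `d`) still free after `σ`
    let P : Finset E := (freeAfter vert σ).filter fun f => Incident vert f d
    (Finset.univ.filter fun π : E ≃ Fin m =>
        (∀ i : Fin σ.length, ((π (σ.get i)) : ℕ) = (i : ℕ)) ∧
        ((π (owner vert (fun e => (π e : ℕ)) d)) : ℕ) = r - 1 ∧
        owner vert (fun e => (π e : ℕ)) d ∈ U).card
      = (P ∩ U).card * (m - r).factorial := by
  classical
  intro P
  have hrm' : r - 1 < m := lt_of_lt_of_le (Nat.sub_lt hr1 one_pos) hrm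
  set v : Fin m := ⟨r - 1, hrm'⟩ with hv
  have hfilt : (Finset.univ.filter fun π : E ≃ Fin m =>
        (∀ i : Fin σ.length, ((π (σ.get i)) : ℕ) = (i : ℕ)) ∧
        ((π (owner vert (fun e => (π e : ℕ)) d)) : ℕ) = r - 1 ∧
        owner vert (fun e => (π e : ℕ)) d ∈ U)
      = (Finset.univ.filter fun π : E ≃ Fin m =>
        (∀ i : Fin σ.length, ((π (σ.get i)) : ℕ) = (i : ℕ)) ∧ π.symm v ∈ P ∩ U) := by
    apply Finset.filter_congr
    intro π _
    have hinj : Function.Injective (fun e => ((π e : ℕ))) :=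
      fun a b h => π.injective (Fin.val_injective h)
    constructor
    · rintro ⟨hA, hB1, hB2⟩
      refine ⟨hA, ?_⟩
      obtain ⟨⟨hMw, hIw⟩, hminw⟩ := owner_spec vert hne (fun e => ((π e : ℕ))) d
      set w := owner vert (fun e => ((π e : ℕ))) d with hw
      have hπw : π w = v := Fin.ext hB1
      rw [← hπw, Equiv.symm_apply_apply]
      refine Finset.mem_inter.2 ⟨Finset.mem_filter.2 ⟨?_, hIw⟩, hB2⟩
      exact (matched_iff_mem_freeAfter vert π σ hA w (hB1.trans hσlen.symm)).mp hMw
    · rintro ⟨hA, hPU⟩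
      obtain ⟨heP, heU⟩ := Finset.mem_inter.mp hPU
      obtain ⟨heF, heI⟩ := Finset.mem_filter.mp heP
      have hev : ((π (π.symm v) : ℕ)) = r - 1 := by simp [hv]
      have hMe : Matched vert (fun x => ((π x : ℕ))) (π.symm v) :=
        (matched_iff_mem_freeAfter vert π σ hA (π.symm v) (hev.trans hσlen.symm)).mpr heF
      have hdfree : ∀ f, ((π f : ℕ)) < σ.length → Incident vert f d →
          ¬ Matched vert (fun x => ((π x : ℕ))) f :=
        (mem_freeAfter_iff vert π σ hA d).mp hfree
      have hmin : ∀ f', Matched vert (fun x => ((π x : ℕ))) f' → Incident vert f' d →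
          ((π (π.symm v) : ℕ)) ≤ ((π f' : ℕ)) := by
        intro f' h1 h2
        by_contra hlt
        push_neg at hlt
        rw [hev] at hlt
        exact hdfree f' (by omega) h2 h1
      have howner : owner vert (fun e => ((π e : ℕ))) d = π.symm v :=
        owner_eq vert hne _ hinj d (π.symm v) hMe heI hmin
      rw [howner]
      exact ⟨hA, hev, heU⟩
  rw [hfilt]
  rw [Finset.card_eq_sum_card_fiberwise
    (f := fun π : E ≃ Fin m => π.symm v) (t := P ∩ U)
    (fun π hπ => (Finset.mem_filter.mp hπ).2.2)]
  have hterm : ∀ e ∈ P ∩ U,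
      (((Finset.univ.filter fun π : E ≃ Fin m =>
        (∀ i : Fin σ.length, ((π (σ.get i)) : ℕ) = (i : ℕ)) ∧ π.symm v ∈ P ∩ U)).filter
          fun π => π.symm v = e).card = (m - r).factorial := by
    intro e he
    obtain ⟨heP, heU⟩ := Finset.mem_inter.mp he
    obtain ⟨heF, heI⟩ := Finset.mem_filter.mp heP
    have heσ : e ∉ σ := fun h => not_mem_foldl_stepFree vert hne σ Finset.univ h heF
    have hnd' : (σ ++ [e]).Nodup := by
      simp [List.nodup_append, hσinj, heσ]
      intro a ha hae; exact heσ (hae ▸ ha)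
    have hlen' : (σ ++ [e]).length = r := by
      simp [hσlen]; omega
    rw [Finset.filter_filter]
    have hcount := count_ext hm (σ ++ [e]) hnd' (by rw [hlen']; exact hrm)
    have hfac : (m - (σ ++ [e]).length).factorial = (m - r).factorial := by rw [hlen']
    refine Eq.trans ?_ (hcount.trans hfac)
    congr 1
    apply Finset.filter_congr
    intro π _
    constructor
    · rintro ⟨⟨hA, _⟩, hse⟩
      have hπe : ((π e : ℕ)) = r - 1 := by rw [← hse]; simp [hv]
      intro i
      have hi : (i : ℕ) < σ.length + 1 := by
        have h3 := i.2; simp only [List.length_append, List.length_singleton] at h3; exact h3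
      rcases Nat.lt_succ_iff_lt_or_eq.mp hi with h | h
      · have := hA ⟨i, h⟩
        simpa [List.get_eq_getElem, List.getElem_append_left, h] using this
      · have hget : (σ ++ [e]).get i = e := by
          have : (i : ℕ) = σ.length := h
          simp [List.get_eq_getElem, this, List.getElem_concat_length]
        rw [hget, hπe]
        omega
    · intro h
      obtain ⟨hA, hae⟩ := hL_restrict π σ e h
      have hπe : π e = v := Fin.ext (by rw [hae, hσlen])
      have hse : π.symm v = e := by rw [← hπe, Equiv.symm_apply_apply]
      exact ⟨⟨hA, hse ▸ he⟩, hse⟩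
  rw [Finset.sum_congr rfl hterm, Finset.sum_const, smul_eq_mul]
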